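/- Let H be a real inner product space, x : ι → H a family of points, and let C, C' be disjoint nonempty finite subsets of ι. Then Ward's linkage is nonnegative: I(C ∪ C') ≥ I(C) + I(C'), i.e. δ(C,C') ≥ 0, where I(C) = ∑_{i∈C} ‖x_i − x̄_C‖² with x̄_C = (1/|C|) ∑_{i∈C} x_i. -/

import Mathlib

open Finset

/-- The centroid `x̄_C = (1/|C|) ∑_{i∈C} x_i` of the cluster `C`. -/
noncomputable def centroid {ι H : Type*} [NormedAddCommGroup H] [InnerProductSpace ℝ H]
    (x : ι → H) (C : Finset ι) : H :=
  (C.card : ℝ)⁻¹ • ∑ i ∈ C, x i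

/-- The inertia (error sum of squares) `I(C) = ∑_{i∈C} ‖x_i − x̄_C‖²` of the cluster `C`. -/
noncomputable def inertia {ι H : Type*} [NormedAddCommGroup H] [InnerProductSpace ℝ H]
    (x : ι → H) (C : Finset ι) : ℝ :=
  ∑ i ∈ C, ‖x i - centroid x C‖ ^ 2

/-- The similarity sum `S(C) = ∑_{(i,j)∈C×C} ⟨x_i, x_j⟩` of the cluster `C`. -/
noncomputable def simSum {ι H : Type*} [NormedAddCommGroup H] [InnerProductSpace ℝ H]
    (x : ι → H) (C : Finset ι) : ℝ :=
  ∑ i ∈ C, ∑ j ∈ C, (inner ℝ (x i) (x j) : ℝ)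

/-- Ward's linkage `δ(C,C') = I(C ∪ C') − I(C) − I(C')`. -/
noncomputable def ward {ι H : Type*} [DecidableEq ι] [NormedAddCommGroup H]
    [InnerProductSpace ℝ H] (x : ι → H) (C C' : Finset ι) : ℝ :=
  inertia x (C ∪ C') - inertia x C - inertia x C'

lemma sum_sub_centroid {ι H : Type*} [NormedAddCommGroup H] [InnerProductSpace ℝ H]
    (x : ι → H) {C : Finset ι} (hC : C.Nonempty) :
    ∑ i ∈ C, (x i - _root_.centroid x C) = 0 := by
  have hn : (C.card : ℝ) ≠ 0 := by
    exact_mod_cast (Finset.card_pos.mpr hC).ne'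
  simp only [Finset.sum_sub_distrib, Finset.sum_const, _root_.centroid]
  rw [← Nat.cast_smul_eq_nsmul ℝ, smul_smul, mul_inv_cancel₀ hn, one_smul, sub_self]

lemma inertia_le {ι H : Type*} [NormedAddCommGroup H] [InnerProductSpace ℝ H]
    (x : ι → H) {C : Finset ι} (hC : C.Nonempty) (b : H) :
    inertia x C ≤ ∑ i ∈ C, ‖x i - b‖ ^ 2 := by
  set μ := _root_.centroid x C with hμ
  have hsum := sum_sub_centroid x hC
  rw [← hμ] at hsum
  have hpt : ∀ i ∈ C, ‖x i - b‖ ^ 2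
      = ‖x i - μ‖ ^ 2 + 2 * inner ℝ (x i - μ) (μ - b) + ‖μ - b‖ ^ 2 := by
    intro i _
    have h : x i - b = (x i - μ) + (μ - b) := by abel
    rw [h, @norm_add_sq_real]
  have hz : ∑ i ∈ C, 2 * (inner ℝ (x i - μ) (μ - b) : ℝ) = 0 := by
    rw [← Finset.mul_sum, ← sum_inner, hsum, inner_zero_left, mul_zero]
  rw [Finset.sum_congr rfl hpt, Finset.sum_add_distrib, Finset.sum_add_distrib, hz,
    Finset.sum_const, nsmul_eq_mul]
  have h0 : (0:ℝ) ≤ (C.card : ℝ) * ‖μ - b‖ ^ 2 := by positivity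
  simp only [inertia, ← hμ]
  linarith

/-- Ward's linkage is nonnegative: `I(C ∪ C') ≥ I(C) + I(C')`, i.e. `δ(C,C') ≥ 0`. -/
theorem ward_nonneg
    {ι H : Type*} [DecidableEq ι] [NormedAddCommGroup H] [InnerProductSpace ℝ H]
    (x : ι → H) (C C' : Finset ι) (hC : C.Nonempty) (hC' : C'.Nonempty)
    (hdisj : Disjoint C C') :
    inertia x C + inertia x C' ≤ inertia x (C ∪ C') ∧ 0 ≤ ward x C C' := by
  have h1 : inertia x (C ∪ C') = ∑ i ∈ C, ‖x i - centroid x (C ∪ C')‖ ^ 2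
      + ∑ i ∈ C', ‖x i - centroid x (C ∪ C')‖ ^ 2 := by
    rw [inertia, Finset.sum_union hdisj]
  have h2 := inertia_le x hC (centroid x (C ∪ C'))
  have h3 := inertia_le x hC' (centroid x (C ∪ C'))
  constructor
  · rw [h1]; linarith
  · unfold ward; rw [h1]; linarith
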